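/- Temperature monotonicity of the softmax maximizer: for logits s₁,…,s_K with a strict unique maximum at index c* and temperatures 0 < γ₁ < γ₂, the softmax probability of c* at temperature γ₁ is strictly greater than at temperature γ₂: exp(s_{c*}/γ₁)/∑ᵢ exp(sᵢ/γ₁) > exp(s_{c*}/γ₂)/∑ᵢ exp(sᵢ/γ₂). -/

import Mathlib

theorem stmt_7 {K : ℕ} (hK : 2 ≤ K) (s : Fin K → ℝ) (cstar : Fin K)
    (hmax : ∀ i : Fin K, i ≠ cstar → s i < s cstar)
    (γ₁ γ₂ : ℝ) (hγ₁ : 0 < γ₁) (hγ : γ₁ < γ₂) :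
    Real.exp (s cstar / γ₁) / (∑ i, Real.exp (s i / γ₁))
      > Real.exp (s cstar / γ₂) / (∑ i, Real.exp (s i / γ₂)) := by
  have hγ₂ : 0 < γ₂ := hγ₁.trans hγ
  -- rewrite each side as 1 / ∑ exp((s i - s cstar)/γ)
  have key : ∀ γ : ℝ, 0 < γ →
      Real.exp (s cstar / γ) / (∑ i, Real.exp (s i / γ))
        = 1 / (∑ i, Real.exp ((s i - s cstar) / γ)) := by
    intro γ hγ0
    have hsum : (∑ i, Real.exp (s i / γ))
        = Real.exp (s cstar / γ) * ∑ i, Real.exp ((s i - s cstar) / γ) := by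
      rw [Finset.mul_sum]
      refine Finset.sum_congr rfl fun i _ => ?_
      rw [← Real.exp_add]
      congr 1
      field_simp
      ring
    rw [hsum]
    rw [div_mul_eq_div_div]
    rw [div_self (Real.exp_ne_zero _)]
  rw [key γ₁ hγ₁, key γ₂ hγ₂]
  have hpos : ∀ γ : ℝ, 0 < ∑ i, Real.exp ((s i - s cstar) / γ) :=
    fun γ => Finset.sum_pos (fun i _ => Real.exp_pos _) ⟨cstar, Finset.mem_univ _⟩
  have hlt : (∑ i, Real.exp ((s i - s cstar) / γ₁))
      < ∑ i, Real.exp ((s i - s cstar) / γ₂) := by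
    obtain ⟨j, hj⟩ : ∃ j : Fin K, j ≠ cstar := by
      have : 1 < Fintype.card (Fin K) := by simp only [Fintype.card_fin]; omega
      exact Fintype.exists_ne_of_one_lt_card this cstar
    have hterm : ∀ i : Fin K, Real.exp ((s i - s cstar) / γ₁)
        ≤ Real.exp ((s i - s cstar) / γ₂) := by
      intro i
      apply Real.exp_le_exp.mpr
      rcases eq_or_ne i cstar with h | h
      · simp [h]
      · have hneg : s i - s cstar < 0 := sub_neg.mpr (hmax i h)
        rw [div_le_div_iff₀ hγ₁ hγ₂]
        nlinarith
    refine Finset.sum_lt_sum (fun i _ => hterm i) ⟨j, Finset.mem_univ _, ?_⟩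
    apply Real.exp_lt_exp.mpr
    have hneg : s j - s cstar < 0 := sub_neg.mpr (hmax j hj)
    rw [div_lt_div_iff₀ hγ₁ hγ₂]
    nlinarith
  exact one_div_lt_one_div_of_lt (hpos γ₁) hlt
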